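/- Let G and H be finite groups. Let s ∈ G have order m with S = ⟨s⟩ a normal subgroup of index 3 in G, and let t ∈ H have order m with T = ⟨t⟩ a normal subgroup of index 3 in H. Let e = a₁, a₂, a₃ be a transversal of the cosets of S in G and e = b₁, b₂, b₃ a transversal of the cosets of T in H, and define φ : G → H by φ(a_i·sᵏ) = b_i·tᵏ for i = 1, 2, 3 and 0 ≤ k < m (a well-defined bijection). If φ(x⁻¹) = φ(x)⁻¹ for all x ∈ G, and additionally φ(a₂·a₃⁻¹) = φ(a₂)·φ(a₃)⁻¹, then φ is a group isomorphism from G onto H. -/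

import Mathlib

private lemma fin3_eq_two' {i : Fin 3} (h0 : i ≠ 0) (h1 : i ≠ 1) : i = 2 := by
  fin_cases i <;> simp_all

private lemma fin3_eq_one' {i : Fin 3} (h0 : i ≠ 0) (h1 : i ≠ 2) : i = 1 := by
  fin_cases i <;> simp_all

private lemma sq_mem_contra {G : Type*} [Group G] [Finite G] {S : Subgroup G} [S.Normal]
    (hiS : S.index = 3) {g : G} (hg : g ∉ S) (h2 : g * g ∈ S) : False := by
  set x : G ⧸ S := (g : G ⧸ S) with hxd
  have hx1 : x ≠ 1 := by simpa [hxd, QuotientGroup.eq_one_iff] using hg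
  have hx2 : x ^ 2 = 1 := by
    rw [hxd, pow_two, ← QuotientGroup.mk_mul]
    exact (QuotientGroup.eq_one_iff _).2 h2
  have hd2 : orderOf x ∣ 2 := orderOf_dvd_of_pow_eq_one hx2
  have hd3 : orderOf x ∣ 3 := by
    have h := orderOf_dvd_natCard x
    rwa [← Subgroup.index_eq_card, hiS] at h
  have h1 : orderOf x ∣ 1 := by
    have h := Nat.dvd_gcd hd2 hd3
    simpa using h
  exact hx1 (orderOf_eq_one_iff.1 (Nat.dvd_one.1 h1))

theorem index_three_inverse_pattern_determines_group
    {G H : Type*} [Group G] [Group H] [Finite G] [Finite H]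
    (m : ℕ) [NeZero m] (s : G) (t : H) (hs : orderOf s = m) (ht : orderOf t = m)
    (hnS : (Subgroup.zpowers s).Normal) (hnT : (Subgroup.zpowers t).Normal)
    (hiG : (Subgroup.zpowers s).index = 3)
    (hiH : (Subgroup.zpowers t).index = 3)
    (a : Fin 3 → G) (b : Fin 3 → H) (ha : a 0 = 1) (hb : b 0 = 1)
    (htG : Function.Bijective fun p : Fin 3 × Fin m => a p.1 * s ^ (p.2 : ℕ))
    (htH : Function.Bijective fun p : Fin 3 × Fin m => b p.1 * t ^ (p.2 : ℕ))
    (φ : G → H)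
    (hφ : ∀ (i : Fin 3) (k : ℕ), φ (a i * s ^ k) = b i * t ^ k)
    (hinv : ∀ x : G, φ x⁻¹ = (φ x)⁻¹)
    (h23 : φ (a 1 * (a 2)⁻¹) = φ (a 1) * (φ (a 2))⁻¹) :
    Function.Bijective φ ∧ ∀ x y : G, φ (x * y) = φ x * φ y := by
  haveI := hnS
  haveI := hnT
  have hm : 0 < m := Nat.pos_of_ne_zero (NeZero.ne m)
  have hmz : (0:ℤ) < (m:ℤ) := by exact_mod_cast hm
  have hm0 : (m:ℤ) ≠ 0 := hmz.ne'
  have hlt : ∀ k : ℤ, (k % (m:ℤ)).toNat < m := by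
    intro k
    have h1 := Int.emod_nonneg k hm0
    have h2 := Int.emod_lt_of_pos k hmz
    omega
  -- zpow reductions
  have spow : ∀ k : ℤ, s ^ k = s ^ ((k % (m:ℤ)).toNat) := by
    intro k
    calc s ^ k = s ^ (k % ((orderOf s : ℤ))) := (zpow_mod_orderOf s k).symm
      _ = s ^ (k % (m:ℤ)) := by rw [hs]
      _ = s ^ (((k % (m:ℤ)).toNat : ℤ)) := by
          rw [Int.toNat_of_nonneg (Int.emod_nonneg k hm0)]
      _ = s ^ ((k % (m:ℤ)).toNat) := zpow_natCast _ _
  have tpow : ∀ k : ℤ, t ^ k = t ^ ((k % (m:ℤ)).toNat) := by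
    intro k
    calc t ^ k = t ^ (k % ((orderOf t : ℤ))) := (zpow_mod_orderOf t k).symm
      _ = t ^ (k % (m:ℤ)) := by rw [ht]
      _ = t ^ (((k % (m:ℤ)).toNat : ℤ)) := by
          rw [Int.toNat_of_nonneg (Int.emod_nonneg k hm0)]
      _ = t ^ ((k % (m:ℤ)).toNat) := zpow_natCast _ _
  have scong : ∀ x y : ℤ, (m:ℤ) ∣ x - y → s ^ x = s ^ y := by
    intro x y hxy
    have h1 : s ^ (x - y) = 1 :=
      orderOf_dvd_iff_zpow_eq_one.1 (by rw [hs]; exact hxy)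
    calc s ^ x = s ^ (y + (x - y)) := by congr 1; ring
      _ = s ^ y * s ^ (x - y) := zpow_add s y (x - y)
      _ = s ^ y := by rw [h1, mul_one]
  have tcong : ∀ x y : ℤ, (m:ℤ) ∣ x - y → t ^ x = t ^ y := by
    intro x y hxy
    have h1 : t ^ (x - y) = 1 :=
      orderOf_dvd_iff_zpow_eq_one.1 (by rw [ht]; exact hxy)
    calc t ^ x = t ^ (y + (x - y)) := by congr 1; ring
      _ = t ^ y * t ^ (x - y) := zpow_add t y (x - y)
      _ = t ^ y := by rw [h1, mul_one]
  -- coordinate uniqueness and existence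
  have uniqG : ∀ (i j : Fin 3) (k l : ℤ), a i * s ^ k = a j * s ^ l →
      i = j ∧ (m:ℤ) ∣ k - l := by
    intro i j k l h
    have hinj := htG.injective (a₁ := (i, ⟨(k % (m:ℤ)).toNat, hlt k⟩))
      (a₂ := (j, ⟨(l % (m:ℤ)).toNat, hlt l⟩))
      (by
        show a i * s ^ ((k % (m:ℤ)).toNat) = a j * s ^ ((l % (m:ℤ)).toNat)
        rw [← spow, ← spow]; exact h)
    have h1 : i = j := congrArg Prod.fst hinj
    have h2 : (k % (m:ℤ)).toNat = (l % (m:ℤ)).toNat := by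
      have := congrArg (fun p : Fin 3 × Fin m => (p.2 : ℕ)) hinj
      simpa using this
    refine ⟨h1, ?_⟩
    have hk : k % (m:ℤ) = l % (m:ℤ) := by
      have h3 := Int.emod_nonneg k hm0
      have h4 := Int.emod_nonneg l hm0
      omega
    exact Int.ModEq.dvd (hk.symm : Int.ModEq (m:ℤ) l k)
  have uniqH : ∀ (i j : Fin 3) (k l : ℤ), b i * t ^ k = b j * t ^ l →
      i = j ∧ (m:ℤ) ∣ k - l := by
    intro i j k l h
    have hinj := htH.injective (a₁ := (i, ⟨(k % (m:ℤ)).toNat, hlt k⟩))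
      (a₂ := (j, ⟨(l % (m:ℤ)).toNat, hlt l⟩))
      (by
        show b i * t ^ ((k % (m:ℤ)).toNat) = b j * t ^ ((l % (m:ℤ)).toNat)
        rw [← tpow, ← tpow]; exact h)
    have h1 : i = j := congrArg Prod.fst hinj
    have h2 : (k % (m:ℤ)).toNat = (l % (m:ℤ)).toNat := by
      have := congrArg (fun p : Fin 3 × Fin m => (p.2 : ℕ)) hinj
      simpa using this
    refine ⟨h1, ?_⟩
    have hk : k % (m:ℤ) = l % (m:ℤ) := by
      have h3 := Int.emod_nonneg k hm0
      have h4 := Int.emod_nonneg l hm0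
      omega
    exact Int.ModEq.dvd (hk.symm : Int.ModEq (m:ℤ) l k)
  have surjG : ∀ g : G, ∃ (i : Fin 3) (k : ℤ), g = a i * s ^ k := by
    intro g
    obtain ⟨⟨i, k⟩, hk⟩ := htG.surjective g
    exact ⟨i, ((k : ℕ) : ℤ), by rw [zpow_natCast]; exact hk.symm⟩
  have surjH : ∀ g : H, ∃ (i : Fin 3) (k : ℤ), g = b i * t ^ k := by
    intro g
    obtain ⟨⟨i, k⟩, hk⟩ := htH.surjective g
    exact ⟨i, ((k : ℕ) : ℤ), by rw [zpow_natCast]; exact hk.symm⟩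
  -- φ on integer coordinates
  have hφz : ∀ (i : Fin 3) (k : ℤ), φ (a i * s ^ k) = b i * t ^ k := by
    intro i k
    rw [spow k, tpow k]
    exact hφ i _
  have hφa : ∀ i : Fin 3, φ (a i) = b i := by
    intro i
    have h := hφz i 0
    simpa using h
  -- transversal elements not in the cyclic subgroup
  have aniS : ∀ i : Fin 3, i ≠ 0 → a i ∉ Subgroup.zpowers s := by
    intro i hi hmem
    obtain ⟨z, hz⟩ := Subgroup.mem_zpowers_iff.1 hmem
    have h : a i * s ^ (0:ℤ) = a 0 * s ^ z := by
      rw [zpow_zero, mul_one, ha, one_mul]; exact hz.symm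
    exact hi (uniqG i 0 0 z h).1
  have bniT : ∀ i : Fin 3, i ≠ 0 → b i ∉ Subgroup.zpowers t := by
    intro i hi hmem
    obtain ⟨z, hz⟩ := Subgroup.mem_zpowers_iff.1 hmem
    have h : b i * t ^ (0:ℤ) = b 0 * t ^ z := by
      rw [zpow_zero, mul_one, hb, one_mul]; exact hz.symm
    exact hi (uniqH i 0 0 z h).1
  have sqG : ∀ g : G, g ∉ Subgroup.zpowers s → g * g ∈ Subgroup.zpowers s → False :=
    fun g h1 h2 => sq_mem_contra hiG h1 h2
  have sqH : ∀ g : H, g ∉ Subgroup.zpowers t → g * g ∈ Subgroup.zpowers t → False :=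
    fun g h1 h2 => sq_mem_contra hiH h1 h2
  -- inverse coordinates in G
  obtain ⟨i1, c1, hc1⟩ := surjG (a 1)⁻¹
  have hi12 : i1 = 2 := by
    have h0 : i1 ≠ 0 := by
      rintro rfl
      rw [ha, one_mul] at hc1
      exact aniS 1 (by decide) ⟨-c1, by show s ^ (-c1) = a 1; rw [zpow_neg, ← hc1, inv_inv]⟩
    have h1 : i1 ≠ 1 := by
      rintro rfl
      have he : a 1 * a 1 * s ^ c1 = 1 := by
        rw [mul_assoc, ← hc1, mul_inv_cancel]
      have hsq : a 1 * a 1 = s ^ (-c1) := by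
        rw [zpow_neg]; exact eq_inv_of_mul_eq_one_left he
      exact sqG (a 1) (aniS 1 (by decide)) ⟨-c1, hsq.symm⟩
    exact fin3_eq_two' h0 h1
  rw [hi12] at hc1
  obtain ⟨i2, c2, hc2⟩ := surjG (a 2)⁻¹
  have hi21 : i2 = 1 := by
    have h0 : i2 ≠ 0 := by
      rintro rfl
      rw [ha, one_mul] at hc2
      exact aniS 2 (by decide) ⟨-c2, by show s ^ (-c2) = a 2; rw [zpow_neg, ← hc2, inv_inv]⟩
    have h1 : i2 ≠ 2 := by
      rintro rfl
      have he : a 2 * a 2 * s ^ c2 = 1 := by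
        rw [mul_assoc, ← hc2, mul_inv_cancel]
      have hsq : a 2 * a 2 = s ^ (-c2) := by
        rw [zpow_neg]; exact eq_inv_of_mul_eq_one_left he
      exact sqG (a 2) (aniS 2 (by decide)) ⟨-c2, hsq.symm⟩
    exact fin3_eq_one' h0 h1
  rw [hi21] at hc2
  -- square of a 1
  obtain ⟨iu, u, hu⟩ := surjG (a 1 * a 1)
  have hiu2 : iu = 2 := by
    have h0 : iu ≠ 0 := by
      rintro rfl
      rw [ha, one_mul] at hu
      exact sqG (a 1) (aniS 1 (by decide)) ⟨u, hu.symm⟩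
    have h1 : iu ≠ 1 := by
      rintro rfl
      have h : a 1 = s ^ u := mul_left_cancel hu
      exact aniS 1 (by decide) ⟨u, h.symm⟩
    exact fin3_eq_two' h0 h1
  rw [hiu2] at hu
  -- inverse coordinates in H
  obtain ⟨j1, c1', hd1⟩ := surjH (b 1)⁻¹
  have hj12 : j1 = 2 := by
    have h0 : j1 ≠ 0 := by
      rintro rfl
      rw [hb, one_mul] at hd1
      exact bniT 1 (by decide) ⟨-c1', by show t ^ (-c1') = b 1; rw [zpow_neg, ← hd1, inv_inv]⟩
    have h1 : j1 ≠ 1 := by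
      rintro rfl
      have he : b 1 * b 1 * t ^ c1' = 1 := by
        rw [mul_assoc, ← hd1, mul_inv_cancel]
      have hsq : b 1 * b 1 = t ^ (-c1') := by
        rw [zpow_neg]; exact eq_inv_of_mul_eq_one_left he
      exact sqH (b 1) (bniT 1 (by decide)) ⟨-c1', hsq.symm⟩
    exact fin3_eq_two' h0 h1
  rw [hj12] at hd1
  obtain ⟨j2, c2', hd2⟩ := surjH (b 2)⁻¹
  have hj21 : j2 = 1 := by
    have h0 : j2 ≠ 0 := by
      rintro rfl
      rw [hb, one_mul] at hd2
      exact bniT 2 (by decide) ⟨-c2', by show t ^ (-c2') = b 2; rw [zpow_neg, ← hd2, inv_inv]⟩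
    have h1 : j2 ≠ 2 := by
      rintro rfl
      have he : b 2 * b 2 * t ^ c2' = 1 := by
        rw [mul_assoc, ← hd2, mul_inv_cancel]
      have hsq : b 2 * b 2 = t ^ (-c2') := by
        rw [zpow_neg]; exact eq_inv_of_mul_eq_one_left he
      exact sqH (b 2) (bniT 2 (by decide)) ⟨-c2', hsq.symm⟩
    exact fin3_eq_one' h0 h1
  rw [hj21] at hd2
  obtain ⟨jv, u', hv⟩ := surjH (b 1 * b 1)
  have hjv2 : jv = 2 := by
    have h0 : jv ≠ 0 := by
      rintro rfl
      rw [hb, one_mul] at hv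
      exact sqH (b 1) (bniT 1 (by decide)) ⟨u', hv.symm⟩
    have h1 : jv ≠ 1 := by
      rintro rfl
      have h : b 1 = t ^ u' := mul_left_cancel hv
      exact bniT 1 (by decide) ⟨u', h.symm⟩
    exact fin3_eq_two' h0 h1
  rw [hjv2] at hv
  -- conjugation exponents
  have hexG : ∀ j : Fin 3, ∃ z : ℤ, (a j)⁻¹ * s * a j = s ^ z := by
    intro j
    have h := hnS.conj_mem s (Subgroup.mem_zpowers s) (a j)⁻¹
    rw [inv_inv] at h
    obtain ⟨z, hz⟩ := Subgroup.mem_zpowers_iff.1 h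
    exact ⟨z, hz.symm⟩
  choose q hqs using hexG
  have hexH : ∀ j : Fin 3, ∃ z : ℤ, (b j)⁻¹ * t * b j = t ^ z := by
    intro j
    have h := hnT.conj_mem t (Subgroup.mem_zpowers t) (b j)⁻¹
    rw [inv_inv] at h
    obtain ⟨z, hz⟩ := Subgroup.mem_zpowers_iff.1 h
    exact ⟨z, hz.symm⟩
  choose q' hqt using hexH
  have hsa : ∀ (j : Fin 3) (x : ℤ), s ^ x * a j = a j * s ^ (x * q j) := by
    intro j x
    have h0 := conj_zpow (i := x) (a := (a j)⁻¹) (b := s)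
    rw [inv_inv] at h0
    have h1 : (a j)⁻¹ * s ^ x * a j = s ^ (x * q j) := by
      rw [← h0, hqs j, ← zpow_mul, mul_comm]
    calc s ^ x * a j = a j * ((a j)⁻¹ * s ^ x * a j) := by
          rw [← mul_assoc, ← mul_assoc, mul_inv_cancel, one_mul]
      _ = a j * s ^ (x * q j) := by rw [h1]
  have htb' : ∀ (j : Fin 3) (x : ℤ), t ^ x * b j = b j * t ^ (x * q' j) := by
    intro j x
    have h0 := conj_zpow (i := x) (a := (b j)⁻¹) (b := t)
    rw [inv_inv] at h0
    have h1 : (b j)⁻¹ * t ^ x * b j = t ^ (x * q' j) := by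
      rw [← h0, hqt j, ← zpow_mul, mul_comm]
    calc t ^ x * b j = b j * ((b j)⁻¹ * t ^ x * b j) := by
          rw [← mul_assoc, ← mul_assoc, mul_inv_cancel, one_mul]
      _ = b j * t ^ (x * q' j) := by rw [h1]
  -- matching via hinv : from x = a 2 * s ^ k
  have dvdA : ∀ k : ℤ, (m:ℤ) ∣ (-k * q 1 + c2) - (-k * q' 1 + c2') := by
    intro k
    have e1 : (a 2 * s ^ k)⁻¹ = a 1 * s ^ (-k * q 1 + c2) := by
      rw [mul_inv_rev, ← zpow_neg, hc2, ← mul_assoc, hsa 1 (-k), mul_assoc, ← zpow_add]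
    have e2 : (b 2 * t ^ k)⁻¹ = b 1 * t ^ (-k * q' 1 + c2') := by
      rw [mul_inv_rev, ← zpow_neg, hd2, ← mul_assoc, htb' 1 (-k), mul_assoc, ← zpow_add]
    have h : b 1 * t ^ (-k * q 1 + c2) = b 1 * t ^ (-k * q' 1 + c2') := by
      calc b 1 * t ^ (-k * q 1 + c2) = φ ((a 2 * s ^ k)⁻¹) := by rw [e1, hφz]
        _ = (φ (a 2 * s ^ k))⁻¹ := hinv _
        _ = (b 2 * t ^ k)⁻¹ := by rw [hφz]
        _ = b 1 * t ^ (-k * q' 1 + c2') := e2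
    exact (uniqH 1 1 _ _ h).2
  have dc2 : (m:ℤ) ∣ c2 - c2' := by
    have h := dvdA 0
    have e : (-(0:ℤ) * q 1 + c2) - (-(0:ℤ) * q' 1 + c2') = c2 - c2' := by ring
    rwa [e] at h
  have dq1 : (m:ℤ) ∣ q 1 - q' 1 := by
    have h0 := dvdA 0
    have h1 := dvdA (-1)
    have h := dvd_sub h1 h0
    have e : ((-(-1:ℤ) * q 1 + c2) - (-(-1:ℤ) * q' 1 + c2')) -
        ((-(0:ℤ) * q 1 + c2) - (-(0:ℤ) * q' 1 + c2')) = q 1 - q' 1 := by ring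
    rwa [e] at h
  -- matching via hinv : from x = a 1 * s ^ k
  have dvdB : ∀ k : ℤ, (m:ℤ) ∣ (-k * q 2 + c1) - (-k * q' 2 + c1') := by
    intro k
    have e1 : (a 1 * s ^ k)⁻¹ = a 2 * s ^ (-k * q 2 + c1) := by
      rw [mul_inv_rev, ← zpow_neg, hc1, ← mul_assoc, hsa 2 (-k), mul_assoc, ← zpow_add]
    have e2 : (b 1 * t ^ k)⁻¹ = b 2 * t ^ (-k * q' 2 + c1') := by
      rw [mul_inv_rev, ← zpow_neg, hd1, ← mul_assoc, htb' 2 (-k), mul_assoc, ← zpow_add]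
    have h : b 2 * t ^ (-k * q 2 + c1) = b 2 * t ^ (-k * q' 2 + c1') := by
      calc b 2 * t ^ (-k * q 2 + c1) = φ ((a 1 * s ^ k)⁻¹) := by rw [e1, hφz]
        _ = (φ (a 1 * s ^ k))⁻¹ := hinv _
        _ = (b 1 * t ^ k)⁻¹ := by rw [hφz]
        _ = b 2 * t ^ (-k * q' 2 + c1') := e2
    exact (uniqH 2 2 _ _ h).2
  have dc1 : (m:ℤ) ∣ c1 - c1' := by
    have h := dvdB 0
    have e : (-(0:ℤ) * q 2 + c1) - (-(0:ℤ) * q' 2 + c1') = c1 - c1' := by ring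
    rwa [e] at h
  have dq2 : (m:ℤ) ∣ q 2 - q' 2 := by
    have h0 := dvdB 0
    have h1 := dvdB (-1)
    have h := dvd_sub h1 h0
    have e : ((-(-1:ℤ) * q 2 + c1) - (-(-1:ℤ) * q' 2 + c1')) -
        ((-(0:ℤ) * q 2 + c1) - (-(0:ℤ) * q' 2 + c1')) = q 2 - q' 2 := by ring
    rwa [e] at h
  have dq0 : (m:ℤ) ∣ q 0 - 1 := by
    have h : s ^ (q 0) = s := by
      have h0 := hqs 0
      rw [ha] at h0
      simpa using h0.symm
    rw [← hs]
    exact orderOf_dvd_iff_zpow_eq_one.2 (by rw [zpow_sub, h, zpow_one, mul_inv_cancel])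
  have dq0' : (m:ℤ) ∣ q' 0 - 1 := by
    have h : t ^ (q' 0) = t := by
      have h0 := hqt 0
      rw [hb] at h0
      simpa using h0.symm
    rw [← ht]
    exact orderOf_dvd_iff_zpow_eq_one.2 (by rw [zpow_sub, h, zpow_one, mul_inv_cancel])
  have fin3cases : ∀ i : Fin 3, i = 0 ∨ i = 1 ∨ i = 2 := by decide
  have dq : ∀ j : Fin 3, (m:ℤ) ∣ q j - q' j := by
    intro j
    rcases fin3cases j with rfl | rfl | rfl
    · have h := dvd_sub dq0 dq0'
      have e : (q 0 - 1) - (q' 0 - 1) = q 0 - q' 0 := by ring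
      rwa [e] at h
    · exact dq1
    · exact dq2
  have dsym : ∀ {x y : ℤ}, (m:ℤ) ∣ x - y → (m:ℤ) ∣ y - x := by
    intro x y h
    have h2 := dvd_neg.mpr h
    rwa [neg_sub] at h2
  -- matching u via h23
  have du : (m:ℤ) ∣ u - u' := by
    have e23G : a 1 * (a 2)⁻¹ = a 2 * s ^ (u + c2) := by
      rw [hc2, ← mul_assoc, hu, mul_assoc, ← zpow_add]
    have e23H : b 1 * (b 2)⁻¹ = b 2 * t ^ (u' + c2') := by
      rw [hd2, ← mul_assoc, hv, mul_assoc, ← zpow_add]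
    have h : b 2 * t ^ (u + c2) = b 2 * t ^ (u' + c2') := by
      calc b 2 * t ^ (u + c2) = φ (a 1 * (a 2)⁻¹) := by rw [e23G, hφz]
        _ = φ (a 1) * (φ (a 2))⁻¹ := h23
        _ = b 1 * (b 2)⁻¹ := by rw [hφa 1, hφa 2]
        _ = b 2 * t ^ (u' + c2') := e23H
    have hd := (uniqH 2 2 _ _ h).2
    have h2 := dvd_sub hd dc2
    have e : ((u + c2) - (u' + c2')) - (c2 - c2') = u - u' := by ring
    rwa [e] at h2
  -- restate H structure with G constants
  have hd1' : (b 1)⁻¹ = b 2 * t ^ c1 := by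
    rw [hd1, tcong c1' c1 (dsym dc1)]
  have hd2' : (b 2)⁻¹ = b 1 * t ^ c2 := by
    rw [hd2, tcong c2' c2 (dsym dc2)]
  have hv' : b 1 * b 1 = b 2 * t ^ u := by
    rw [hv, tcong u' u (dsym du)]
  have htb : ∀ (j : Fin 3) (x : ℤ), t ^ x * b j = b j * t ^ (x * q j) := by
    intro j x
    rw [htb' j x, tcong (x * q' j) (x * q j) (by
      have h := Dvd.dvd.mul_left (dsym (dq j)) x
      rwa [mul_sub] at h)]
  -- products of transversal elements
  have g12 : a 1 * a 2 = s ^ (-c1) := by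
    have h : (a 1)⁻¹ * s ^ (-c1) = a 2 := by
      rw [hc1, mul_assoc, ← zpow_add, add_neg_cancel, zpow_zero, mul_one]
    rw [← h, ← mul_assoc, mul_inv_cancel, one_mul]
  have g21 : a 2 * a 1 = s ^ (-c2) := by
    have h : (a 2)⁻¹ * s ^ (-c2) = a 1 := by
      rw [hc2, mul_assoc, ← zpow_add, add_neg_cancel, zpow_zero, mul_one]
    rw [← h, ← mul_assoc, mul_inv_cancel, one_mul]
  have g22 : a 2 * a 2 = a 1 * s ^ (-c1 - u * q 2) := by
    have h2 : a 1 * a 1 * a 2 = a 2 * a 2 * s ^ (u * q 2) := by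
      rw [hu, mul_assoc, hsa 2 u, ← mul_assoc]
    have h1 : a 1 * a 1 * a 2 = a 1 * s ^ (-c1) := by
      rw [mul_assoc, g12]
    have h3 : a 2 * a 2 * s ^ (u * q 2) = a 1 * s ^ (-c1) := by
      rw [← h2, h1]
    calc a 2 * a 2 = a 2 * a 2 * s ^ (u * q 2) * s ^ (-(u * q 2)) := by
          rw [mul_assoc, ← zpow_add, add_neg_cancel, zpow_zero, mul_one]
      _ = a 1 * s ^ (-c1) * s ^ (-(u * q 2)) := by rw [h3]
      _ = a 1 * s ^ (-c1 - u * q 2) := by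
          rw [mul_assoc, ← zpow_add, ← sub_eq_add_neg]
  have k12 : b 1 * b 2 = t ^ (-c1) := by
    have h : (b 1)⁻¹ * t ^ (-c1) = b 2 := by
      rw [hd1', mul_assoc, ← zpow_add, add_neg_cancel, zpow_zero, mul_one]
    rw [← h, ← mul_assoc, mul_inv_cancel, one_mul]
  have k21 : b 2 * b 1 = t ^ (-c2) := by
    have h : (b 2)⁻¹ * t ^ (-c2) = b 1 := by
      rw [hd2', mul_assoc, ← zpow_add, add_neg_cancel, zpow_zero, mul_one]
    rw [← h, ← mul_assoc, mul_inv_cancel, one_mul]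
  have k22 : b 2 * b 2 = b 1 * t ^ (-c1 - u * q 2) := by
    have h2 : b 1 * b 1 * b 2 = b 2 * b 2 * t ^ (u * q 2) := by
      rw [hv', mul_assoc, htb 2 u, ← mul_assoc]
    have h1 : b 1 * b 1 * b 2 = b 1 * t ^ (-c1) := by
      rw [mul_assoc, k12]
    have h3 : b 2 * b 2 * t ^ (u * q 2) = b 1 * t ^ (-c1) := by
      rw [← h2, h1]
    calc b 2 * b 2 = b 2 * b 2 * t ^ (u * q 2) * t ^ (-(u * q 2)) := by
          rw [mul_assoc, ← zpow_add, add_neg_cancel, zpow_zero, mul_one]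
      _ = b 1 * t ^ (-c1) * t ^ (-(u * q 2)) := by rw [h3]
      _ = b 1 * t ^ (-c1 - u * q 2) := by
          rw [mul_assoc, ← zpow_add, ← sub_eq_add_neg]
  -- the multiplication table
  have hP : ∀ i j : Fin 3, ∃ d : ℤ,
      a i * a j = a (i + j) * s ^ d ∧ b i * b j = b (i + j) * t ^ d := by
    intro i j
    rcases fin3cases i with rfl | rfl | rfl <;> rcases fin3cases j with rfl | rfl | rfl
    · exact ⟨0, by simp [ha], by simp [hb]⟩
    · exact ⟨0, by simp [ha], by simp [hb]⟩
    · exact ⟨0, by simp [ha], by simp [hb]⟩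
    · exact ⟨0, by simp [ha], by simp [hb]⟩
    · exact ⟨u, by rw [hu]; norm_num; rfl, by rw [hv']; norm_num; rfl⟩
    · refine ⟨-c1, ?_, ?_⟩
      · rw [g12, show ((1:Fin 3) + 2) = 0 from rfl, ha, one_mul]
      · rw [k12, show ((1:Fin 3) + 2) = 0 from rfl, hb, one_mul]
    · exact ⟨0, by simp [ha], by simp [hb]⟩
    · refine ⟨-c2, ?_, ?_⟩
      · rw [g21, show ((2:Fin 3) + 1) = 0 from rfl, ha, one_mul]
      · rw [k21, show ((2:Fin 3) + 1) = 0 from rfl, hb, one_mul]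
    · refine ⟨-c1 - u * q 2, ?_, ?_⟩
      · rw [g22, show ((2:Fin 3) + 2) = 1 from rfl]
      · rw [k22, show ((2:Fin 3) + 2) = 1 from rfl]
  constructor
  · -- bijectivity
    constructor
    · intro x y hxy
      obtain ⟨px, hpx⟩ := htG.surjective x
      obtain ⟨py, hpy⟩ := htG.surjective y
      have hx : φ x = b px.1 * t ^ (px.2 : ℕ) := by rw [← hpx]; exact hφ px.1 px.2
      have hy : φ y = b py.1 * t ^ (py.2 : ℕ) := by rw [← hpy]; exact hφ py.1 py.2
      have : px = py := htH.injective (by rw [← hx, ← hy, hxy] : _)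
      rw [← hpx, ← hpy, this]
    · intro y
      obtain ⟨p, hp⟩ := htH.surjective y
      exact ⟨a p.1 * s ^ (p.2 : ℕ), by rw [hφ]; exact hp⟩
  · -- multiplicativity
    intro x y
    obtain ⟨i, k, rfl⟩ := surjG x
    obtain ⟨j, l, rfl⟩ := surjG y
    obtain ⟨d, hdG, hdH⟩ := hP i j
    have eG : a i * s ^ k * (a j * s ^ l) = a (i + j) * s ^ (d + (k * q j + l)) := by
      calc a i * s ^ k * (a j * s ^ l) = a i * (s ^ k * a j) * s ^ l := by
            rw [mul_assoc, mul_assoc, mul_assoc]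
        _ = a i * (a j * s ^ (k * q j)) * s ^ l := by rw [hsa]
        _ = a i * a j * (s ^ (k * q j) * s ^ l) := by
            simp [mul_assoc]
        _ = a (i + j) * s ^ d * s ^ (k * q j + l) := by rw [hdG, zpow_add]
        _ = a (i + j) * s ^ (d + (k * q j + l)) := by rw [mul_assoc, ← zpow_add]
    have eH : b i * t ^ k * (b j * t ^ l) = b (i + j) * t ^ (d + (k * q j + l)) := by
      calc b i * t ^ k * (b j * t ^ l) = b i * (t ^ k * b j) * t ^ l := by
            rw [mul_assoc, mul_assoc, mul_assoc]
        _ = b i * (b j * t ^ (k * q j)) * t ^ l := by rw [htb]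
        _ = b i * b j * (t ^ (k * q j) * t ^ l) := by
            simp [mul_assoc]
        _ = b (i + j) * t ^ d * t ^ (k * q j + l) := by rw [hdH, zpow_add]
        _ = b (i + j) * t ^ (d + (k * q j + l)) := by rw [mul_assoc, ← zpow_add]
    rw [eG, hφz, hφz, hφz, eH]
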